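/- Let L φ = ∫_{-r}^0 dμ(θ) φ(θ) be a Riemann–Stieltjes integral operator with μ : [-r,0] → L(X) of bounded variation and total variation measure |μ|. Then for every τ > 0 and every u ∈ W^{2,p}([0,τ],X) with u(0) = 0, the input-output map (𝔽u)(t) = L(Φ_t u) satisfies ∫_0^τ ‖(𝔽u)(t)‖^p dt ≤ (|μ|([-τ,0]))^p ∫_0^τ ‖u(σ)‖^p dσ. -/

import Mathlib

open MeasureTheory Filter Set
open scoped ENNReal NNReal

/-- Let `Lφ = ∫_{-r}^0 dμ(θ) φ(θ)` be a Riemann–Stieltjes operator, modelled by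
`Lφ = ∫ k θ (φ θ) dν(θ)` with `ν` the (finite) total variation measure `|μ|`
supported in `[-r,0]` and `‖k θ‖ ≤ 1`.  Then for every `τ > 0` and every
`u ∈ W^{2,p}([0,τ],X)` with `u(0) = 0` (here: `u` of class `C¹` with `u` in
`L^p`), the input-output map `(𝔽u)(t) = L(Φ_t u)` satisfies
`∫_0^τ ‖(𝔽u)(t)‖^p dt ≤ (|μ|([-τ,0]))^p ∫_0^τ ‖u(σ)‖^p dσ`. -/
theorem input_output_estimate
    (X : Type*) [NormedAddCommGroup X] [NormedSpace ℝ X] [CompleteSpace X]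
    (r : ℝ) (hr : 0 < r) (p : ℝ) (hp : 1 < p)
    (ν : Measure ℝ) [IsFiniteMeasure ν] (hν : ν (Icc (-r) (0:ℝ))ᶜ = 0)
    (k : ℝ → X →L[ℝ] X) (hk : ∀ θ, ‖k θ‖ ≤ 1)
    (hkmeas : AEStronglyMeasurable k ν)
    (τ : ℝ) (hτ : 0 < τ)
    (u : ℝ → X) (hu : ContDiffOn ℝ 1 u (Icc 0 τ)) (hu0 : u 0 = 0)
    (hup : MemLp u (ENNReal.ofReal p) (volume.restrict (Icc 0 τ))) :
    ∫ t in Ioc 0 τ, ‖∫ θ, k θ (if -t ≤ θ then u (t + θ) else 0) ∂ν‖ ^ p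
      ≤ (ν (Icc (-τ) 0)).toReal ^ p * ∫ t in Ioc 0 τ, ‖u t‖ ^ p := by
  have hp0 : (0:ℝ) < p := lt_trans one_pos hp
  have hpne : p ≠ 0 := hp0.ne'
  -- notation
  set S : Set ℝ := Icc (-τ) 0 with hSdef
  have hSm : MeasurableSet S := measurableSet_Icc
  set C : ℝ := (ν S).toReal with hCdef
  have hC0 : 0 ≤ C := ENNReal.toReal_nonneg
  -- the clamping function and the continuous modification `v` of `u`
  set c : ℝ → ℝ := fun σ => max 0 (min σ τ) with hcdef
  have hcCont : Continuous c := continuous_const.max (continuous_id.min continuous_const)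
  have hcmem : ∀ σ, c σ ∈ Icc 0 τ :=
    fun σ => ⟨le_max_left _ _, max_le hτ.le (min_le_right _ _)⟩
  set v : ℝ → X := fun σ => u (c σ) with hvdef
  have hvCont : Continuous v := hu.continuousOn.comp_continuous hcCont hcmem
  have hveq : ∀ σ ∈ Icc 0 τ, v σ = u σ := by
    intro σ hσ
    have h1 : min σ τ = σ := min_eq_left hσ.2
    have h2 : max 0 σ = σ := max_eq_right hσ.1
    simp [hvdef, hcdef, h1, h2]
  -- a uniform bound on `v`
  obtain ⟨M₀, hM₀⟩ := isCompact_Icc.exists_bound_of_continuousOn hu.continuousOn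
  set M : ℝ := max M₀ 0 with hMdef
  have hM0 : 0 ≤ M := le_max_right _ _
  have hMbound : ∀ σ, ‖v σ‖ ≤ M :=
    fun σ => le_trans (hM₀ _ (hcmem σ)) (le_max_left _ _)
  -- the (measurable) kernel `w`
  set w : ℝ → ℝ → X := fun t θ => if -t ≤ θ then v (t + θ) else 0 with hwdef
  have hWm : StronglyMeasurable (fun q : ℝ × ℝ => w q.1 q.2) := by
    have h1 : StronglyMeasurable (fun q : ℝ × ℝ => v (q.1 + q.2)) :=
      (hvCont.comp (continuous_fst.add continuous_snd)).stronglyMeasurable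
    have h2 : MeasurableSet {q : ℝ × ℝ | -q.1 ≤ q.2} :=
      (isClosed_le continuous_fst.neg continuous_snd).measurableSet
    have heq : (fun q : ℝ × ℝ => w q.1 q.2)
        = Set.indicator {q : ℝ × ℝ | -q.1 ≤ q.2} (fun q => v (q.1 + q.2)) := by
      ext q
      by_cases h : -q.1 ≤ q.2
      · simp [hwdef, h, Set.indicator_of_mem (show q ∈ {q : ℝ × ℝ | -q.1 ≤ q.2} from h)]
      · simp [hwdef, h, Set.indicator_of_notMem (show q ∉ {q : ℝ × ℝ | -q.1 ≤ q.2} from h)]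
    rw [heq]
    exact h1.indicator h2
  have hWt : ∀ t, StronglyMeasurable (w t) :=
    fun t => hWm.comp_measurable (measurable_prodMk_left)
  have hwbound : ∀ t θ, ‖w t θ‖ ≤ M := by
    intro t θ
    by_cases h : -t ≤ θ
    · simpa [hwdef, h] using hMbound (t + θ)
    · simpa [hwdef, h] using hM0
  -- conjugate exponent
  set q : ℝ := p / (p - 1) with hqdef
  have hpq : p.HolderConjugate q := Real.HolderConjugate.conjExponent hp
  have hpq' : p / q = p - 1 := hpq.div_conj_eq_sub_one
  -- a.e. membership in `[-r, 0]`
  have hae : ∀ᵐ θ ∂ν, θ ∈ Icc (-r) (0:ℝ) := by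
    rw [ae_iff]
    exact hν
  -- finiteness instances
  haveI : IsFiniteMeasure (volume.restrict (Ioc (0:ℝ) τ)) :=
    ⟨by simpa [Measure.restrict_apply_univ] using measure_Ioc_lt_top⟩
  -- integrability of the kernel on the product
  have hprod : Integrable (fun z : ℝ × ℝ => ‖w z.1 z.2‖ ^ p)
      ((volume.restrict (Ioc 0 τ)).prod (ν.restrict S)) := by
    have hmem : MemLp (fun z : ℝ × ℝ => w z.1 z.2) (ENNReal.ofReal p)
        ((volume.restrict (Ioc 0 τ)).prod (ν.restrict S)) :=
      MemLp.of_bound hWm.aestronglyMeasurable M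
        (Eventually.of_forall fun z => hwbound _ _)
    have := hmem.integrable_norm_rpow
      (by simpa [ENNReal.ofReal_eq_zero, not_le] using hp0) ENNReal.ofReal_ne_top
    simpa [ENNReal.toReal_ofReal hp0.le] using this
  -- the inner integral function
  set h : ℝ → ℝ := fun t => ∫ θ in S, ‖w t θ‖ ^ p ∂ν with hhdef
  have hhInt : Integrable h (volume.restrict (Ioc 0 τ)) := hprod.integral_prod_left
  have hhnonneg : ∀ t, 0 ≤ h t :=
    fun t => integral_nonneg fun θ => Real.rpow_nonneg (norm_nonneg _) _
  -- Step A: pointwise estimate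
  have keyA : ∀ t ∈ Ioc 0 τ,
      ‖∫ θ, k θ (if -t ≤ θ then u (t + θ) else 0) ∂ν‖ ^ p ≤ C ^ (p - 1) * h t := by
    intro t ht
    -- rewrite the integral using `w` and restriction to `S`
    have hIeq : ∫ θ, k θ (if -t ≤ θ then u (t + θ) else 0) ∂ν
        = ∫ θ in S, k θ (w t θ) ∂ν := by
      rw [← integral_indicator hSm]
      refine integral_congr_ae ?_
      filter_upwards [hae] with θ hθ
      by_cases hθS : θ ∈ S
      · rw [Set.indicator_of_mem hθS]
        by_cases hcnd : -t ≤ θ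
        · have hmem : t + θ ∈ Icc 0 τ :=
            ⟨by linarith [hcnd], by linarith [hθS.2, ht.2]⟩
          simp [hwdef, hcnd, hveq _ hmem]
        · simp [hwdef, hcnd]
      · rw [Set.indicator_of_notMem hθS]
        have hlt : θ < -t := by
          rcases lt_or_ge θ (-τ) with hlt | hge
          · linarith [ht.2]
          · exact absurd ⟨hge, hθ.2⟩ hθS
        rw [if_neg (not_le.2 hlt), map_zero]
    rw [hIeq]
    -- measurability / integrability over `ν.restrict S`
    have hwtm : AEStronglyMeasurable (fun θ => ‖w t θ‖) (ν.restrict S) :=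
      (hWt t).norm.aestronglyMeasurable
    have hwtInt : Integrable (fun θ => ‖w t θ‖) (ν.restrict S) := by
      refine (integrable_const M).mono' hwtm ?_
      refine Eventually.of_forall fun θ => ?_
      rw [Real.norm_of_nonneg (norm_nonneg _)]
      exact hwbound t θ
    have hkwm : AEStronglyMeasurable (fun θ => k θ (w t θ)) (ν.restrict S) := by
      have hb : Continuous fun z : (X →L[ℝ] X) × X => z.1 z.2 :=
        isBoundedBilinearMap_apply.continuous
      exact hb.comp_aestronglyMeasurable
        (hkmeas.restrict.prodMk (hWt t).aestronglyMeasurable)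
    -- step 2: move the norm inside
    have h2 : ‖∫ θ in S, k θ (w t θ) ∂ν‖ ≤ ∫ θ in S, ‖w t θ‖ ∂ν := by
      refine le_trans (norm_integral_le_integral_norm _) ?_
      refine integral_mono_of_nonneg (Eventually.of_forall fun θ => norm_nonneg _)
        hwtInt (Eventually.of_forall fun θ => ?_)
      calc ‖k θ (w t θ)‖ ≤ ‖k θ‖ * ‖w t θ‖ := (k θ).le_opNorm _
        _ ≤ 1 * ‖w t θ‖ := mul_le_mul_of_nonneg_right (hk θ) (norm_nonneg _)
        _ = ‖w t θ‖ := one_mul _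
    -- step 3: Hölder
    have h3 : ∫ θ in S, ‖w t θ‖ ∂ν ≤ (h t) ^ (1 / p) * C ^ (1 / q) := by
      have hmemp : MemLp (fun θ => ‖w t θ‖) (ENNReal.ofReal p) (ν.restrict S) :=
        MemLp.of_bound hwtm M (Eventually.of_forall fun θ => by
          rw [Real.norm_of_nonneg (norm_nonneg _)]; exact hwbound t θ)
      have hmemq : MemLp (fun _ : ℝ => (1:ℝ)) (ENNReal.ofReal q) (ν.restrict S) :=
        memLp_const 1
      have := integral_mul_le_Lp_mul_Lq_of_nonneg hpq
        (Eventually.of_forall fun θ => norm_nonneg (w t θ))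
        (Eventually.of_forall fun _ => zero_le_one) hmemp hmemq
      simp only [mul_one, Real.one_rpow] at this
      refine le_trans this ?_
      have hconst : ∫ (_ : ℝ) in S, (1:ℝ) ∂ν = C := by
        rw [integral_const, measureReal_restrict_apply_univ, smul_eq_mul, mul_one, Measure.real]
      rw [hconst]
    -- combine
    have hIneg : 0 ≤ ‖∫ θ in S, k θ (w t θ) ∂ν‖ := norm_nonneg _
    have hRHSnn : 0 ≤ (h t) ^ (1 / p) * C ^ (1 / q) :=
      mul_nonneg (Real.rpow_nonneg (hhnonneg t) _) (Real.rpow_nonneg hC0 _)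
    calc ‖∫ θ in S, k θ (w t θ) ∂ν‖ ^ p
        ≤ ((h t) ^ (1 / p) * C ^ (1 / q)) ^ p :=
          Real.rpow_le_rpow hIneg (le_trans h2 h3) hp0.le
      _ = ((h t) ^ (1 / p)) ^ p * (C ^ (1 / q)) ^ p :=
          Real.mul_rpow (Real.rpow_nonneg (hhnonneg t) _) (Real.rpow_nonneg hC0 _)
      _ = h t * C ^ (p - 1) := by
          rw [← Real.rpow_mul (hhnonneg t), ← Real.rpow_mul hC0,
            one_div_mul_cancel hpne, Real.rpow_one, one_div, inv_mul_eq_div, hpq']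
      _ = C ^ (p - 1) * h t := mul_comm _ _
  -- apply the pointwise estimate under the integral sign
  have step1 : ∫ t in Ioc 0 τ, ‖∫ θ, k θ (if -t ≤ θ then u (t + θ) else 0) ∂ν‖ ^ p
      ≤ ∫ t in Ioc 0 τ, C ^ (p - 1) * h t := by
    refine integral_mono_of_nonneg
      (Eventually.of_forall fun t => Real.rpow_nonneg (norm_nonneg _) _)
      (hhInt.const_mul _) ?_
    exact (ae_restrict_mem measurableSet_Ioc).mono fun t ht => keyA t ht
  rw [integral_const_mul] at step1
  -- Fubini
  have hswap : ∫ t in Ioc 0 τ, h t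
      = ∫ θ in S, ∫ t in Ioc 0 τ, ‖w t θ‖ ^ p ∂(volume) ∂ν := by
    exact integral_integral_swap hprod
  -- the comparison constant
  set K : ℝ := ∫ σ in Ioc 0 τ, ‖v σ‖ ^ p with hKdef
  have hF : Continuous fun σ => ‖v σ‖ ^ p :=
    hvCont.norm.rpow_const fun x => Or.inr hp0.le
  have hFnonneg : ∀ σ, 0 ≤ ‖v σ‖ ^ p := fun σ => Real.rpow_nonneg (norm_nonneg _) _
  have hFint : ∀ a b : ℝ, IntegrableOn (fun σ => ‖v σ‖ ^ p) (Ioc a b) :=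
    fun a b => hF.integrableOn_Ioc
  -- Step C: the inner integral is bounded by K for θ ∈ S
  have keyC : ∀ θ ∈ S, (∫ t in Ioc 0 τ, ‖w t θ‖ ^ p) ≤ K := by
    intro θ hθ
    have hθ1 : -τ ≤ θ := hθ.1
    have hθ2 : θ ≤ 0 := hθ.2
    have hθτ : -θ ≤ τ := by linarith
    -- rewrite as an indicator
    have hind : (fun t => ‖w t θ‖ ^ p)
        = Set.indicator (Ici (-θ)) (fun t => ‖v (t + θ)‖ ^ p) := by
      ext t
      by_cases hcnd : -θ ≤ t
      · have : -t ≤ θ := by linarith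
        rw [Set.indicator_of_mem (mem_Ici.2 hcnd)]
        simp [hwdef, this]
      · have : ¬ (-t ≤ θ) := by intro hcon; exact hcnd (by linarith)
        rw [Set.indicator_of_notMem (by simpa using hcnd)]
        simp [hwdef, this, Real.zero_rpow hpne]
    rw [hind, integral_indicator measurableSet_Ici,
      Measure.restrict_restrict measurableSet_Ici]
    -- bound by the integral over Icc (-θ) τ
    have hsub : Ici (-θ) ∩ Ioc 0 τ ⊆ Icc (-θ) τ := by
      rintro t ⟨ht1, _, ht3⟩; exact ⟨ht1, ht3⟩
    have hcompInt : ∀ a b : ℝ, IntegrableOn (fun t => ‖v (t + θ)‖ ^ p) (Icc a b) := by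
      intro a b
      exact (hF.comp (continuous_id.add continuous_const)).integrableOn_Icc
    have hmono : ∫ t in Ici (-θ) ∩ Ioc 0 τ, ‖v (t + θ)‖ ^ p
        ≤ ∫ t in Icc (-θ) τ, ‖v (t + θ)‖ ^ p := by
      refine setIntegral_mono_set (hcompInt _ _)
        (Eventually.of_forall fun t => hFnonneg _) (HasSubset.Subset.eventuallyLE hsub)
    refine le_trans hmono ?_
    -- translate
    have htrans : ∫ t in Icc (-θ) τ, ‖v (t + θ)‖ ^ p = ∫ σ in Ioc 0 (τ + θ), ‖v σ‖ ^ p := by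
      rw [integral_Icc_eq_integral_Ioc,
        ← intervalIntegral.integral_of_le hθτ,
        intervalIntegral.integral_comp_add_right (fun σ => ‖v σ‖ ^ p) θ,
        neg_add_cancel,
        intervalIntegral.integral_of_le (by linarith : (0:ℝ) ≤ τ + θ)]
    rw [htrans]
    -- monotonicity in the domain
    refine setIntegral_mono_set (hFint 0 τ)
      (Eventually.of_forall fun σ => hFnonneg _)
      (HasSubset.Subset.eventuallyLE (Ioc_subset_Ioc_right (by linarith)))
  -- Step D: integrate over θ
  have stepD : ∫ θ in S, ∫ t in Ioc 0 τ, ‖w t θ‖ ^ p ∂(volume) ∂ν ≤ C * K := by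
    have hKint : Integrable (fun _ : ℝ => K) (ν.restrict S) := integrable_const K
    have := integral_mono_of_nonneg
      (Eventually.of_forall fun θ =>
        integral_nonneg fun t => Real.rpow_nonneg (norm_nonneg _) _)
      hKint ((ae_restrict_mem hSm).mono fun θ hθ => keyC θ hθ)
    refine le_trans this ?_
    rw [integral_const, measureReal_restrict_apply_univ, smul_eq_mul, Measure.real]
  -- identify K with the integral of u
  have hKu : K = ∫ t in Ioc 0 τ, ‖u t‖ ^ p := by
    refine setIntegral_congr_fun measurableSet_Ioc fun t ht => ?_
    rw [hveq t ⟨ht.1.le, ht.2⟩]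
  have hKnonneg : 0 ≤ K :=
    integral_nonneg fun σ => Real.rpow_nonneg (norm_nonneg _) _
  -- put everything together
  have final : C ^ (p - 1) * ∫ t in Ioc 0 τ, h t ≤ C ^ p * K := by
    rw [hswap]
    calc C ^ (p - 1) * ∫ θ in S, ∫ t in Ioc 0 τ, ‖w t θ‖ ^ p ∂(volume) ∂ν
        ≤ C ^ (p - 1) * (C * K) :=
          mul_le_mul_of_nonneg_left stepD (Real.rpow_nonneg hC0 _)
      _ = C ^ p * K := by
          rcases eq_or_lt_of_le hC0 with hCz | hCpos
          · rw [← hCz, Real.zero_rpow (by linarith : p - 1 ≠ 0),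
              Real.zero_rpow hpne]; ring
          · rw [← mul_assoc]
            congr 1
            rw [show C ^ (p - 1) * C = C ^ (p - 1) * C ^ (1:ℝ) by rw [Real.rpow_one],
              ← Real.rpow_add hCpos, sub_add_cancel]
  calc ∫ t in Ioc 0 τ, ‖∫ θ, k θ (if -t ≤ θ then u (t + θ) else 0) ∂ν‖ ^ p
      ≤ C ^ (p - 1) * ∫ t in Ioc 0 τ, h t := step1
    _ ≤ C ^ p * K := final
    _ = (ν (Icc (-τ) 0)).toReal ^ p * ∫ t in Ioc 0 τ, ‖u t‖ ^ p := by rw [hKu]
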